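/- Let Φ and Ψ be root systems in finite-dimensional real inner product spaces, and let f : Φ ∪ {0} → Ψ ∪ {0} be a morphism of root systems, i.e. a map induced by a real linear map of the ambient spans ℝΦ → ℝΨ. Then for every irreducible component Φ' of Φ with f(Φ') ≠ {0}, there exists a unique irreducible component Ψ' of Ψ such that f(Φ') ⊆ Ψ' ∪ {0}. -/

import Mathlib

open scoped RealInnerProductSpace

/-- A (crystallographic, not necessarily reduced or irreducible) root system
in a real inner product space: a finite set of nonzero vectors spanning the
space, closed under the associated reflections, with integral Cartan numbers. -/
structure IsRootSystem {V : Type*} [NormedAddCommGroup V] [InnerProductSpace ℝ V]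
    (Φ : Set V) : Prop where
  finite : Φ.Finite
  ne_zero : ∀ α ∈ Φ, α ≠ 0
  span_eq_top : Submodule.span ℝ Φ = ⊤
  reflect_mem : ∀ α ∈ Φ, ∀ β ∈ Φ, β - (2 * ⟪β, α⟫ / ⟪α, α⟫) • α ∈ Φ
  crystallographic : ∀ α ∈ Φ, ∀ β ∈ Φ, ∃ n : ℤ, 2 * ⟪β, α⟫ / ⟪α, α⟫ = (n : ℝ)

/-- An irreducible component of a root system: the set of roots connected to a
given root by the equivalence relation generated by non-orthogonality. -/
def IsIrreducibleComponent {V : Type*} [NormedAddCommGroup V] [InnerProductSpace ℝ V]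
    (Φ : Set V) (Φ' : Set V) : Prop :=
  ∃ α ∈ Φ, Φ' =
    {β ∈ Φ | Relation.ReflTransGen (fun x y => x ∈ Φ ∧ y ∈ Φ ∧ ⟪x, y⟫ ≠ 0) α β}

namespace RootSystemMorphismAux

open Relation

/-- Chains of fixed length for a relation. -/
inductive ChN {V : Type*} (R : V → V → Prop) : ℕ → V → V → Prop
  | refl (x : V) : ChN R 0 x x
  | head {n : ℕ} {x y z : V} : R x y → ChN R n y z → ChN R (n + 1) x z

theorem exists_chN {V : Type*} {R : V → V → Prop} {a b : V}
    (h : Relation.ReflTransGen R a b) : ∃ n, ChN R n a b := by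
  induction h using Relation.ReflTransGen.head_induction_on with
  | refl => exact ⟨0, ChN.refl b⟩
  | head hr _ ih =>
    obtain ⟨n, hn⟩ := ih
    exact ⟨n + 1, ChN.head hr hn⟩

variable {V W : Type*} [NormedAddCommGroup V] [InnerProductSpace ℝ V]
  [NormedAddCommGroup W] [InnerProductSpace ℝ W]

/-- The connectivity relation on roots. -/
def Rel (Φ : Set V) (x y : V) : Prop := x ∈ Φ ∧ y ∈ Φ ∧ ⟪x, y⟫ ≠ 0

theorem rel_symm (Φ : Set V) : Symmetric (Rel Φ) := by
  rintro x y ⟨hx, hy, hxy⟩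
  exact ⟨hy, hx, by rwa [real_inner_comm]⟩

theorem rtg_symm {Φ : Set V} {x y : V} (h : Relation.ReflTransGen (Rel Φ) x y) :
    Relation.ReflTransGen (Rel Φ) y x :=
  (@Relation.ReflTransGen.stdSymm _ (Rel Φ) ⟨rel_symm Φ⟩).symm _ _ h

section Morphism

variable {Φ : Set V} {Ψ : Set W} (hΦ : IsRootSystem Φ)
  (f : V →ₗ[ℝ] W) (hf : ∀ α ∈ Φ, f α ∈ Ψ ∪ {0})

include hf in
theorem image_mem {α : V} (hα : α ∈ Φ) (hne : f α ≠ 0) : f α ∈ Ψ := by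
  rcases hf α hα with h | h
  · exact h
  · exact absurd h hne

include hΦ hf in
theorem adjacent {u w : V} (h : Rel Φ u w) (hu : f u ≠ 0) (hw : f w ≠ 0) :
    Relation.ReflTransGen (Rel Ψ) (f u) (f w) := by
  obtain ⟨huΦ, hwΦ, huw⟩ := h
  have hfu : f u ∈ Ψ := image_mem f hf huΦ hu
  have hfw : f w ∈ Ψ := image_mem f hf hwΦ hw
  by_cases hor : ⟪f u, f w⟫ ≠ 0
  · exact Relation.ReflTransGen.single ⟨hfu, hfw, hor⟩
  · push_neg at hor
    set c : ℝ := 2 * ⟪w, u⟫ / ⟪u, u⟫ with hc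
    have huu : ⟪u, u⟫ ≠ 0 := (inner_self_ne_zero (𝕜 := ℝ)).2 (hΦ.ne_zero u huΦ)
    have hwu : ⟪w, u⟫ ≠ 0 := by rwa [real_inner_comm]
    have hcne : c ≠ 0 := by
      rw [hc]; exact div_ne_zero (by simpa using hwu) huu
    have hvΦ : w - c • u ∈ Φ := hΦ.reflect_mem u huΦ w hwΦ
    have hfv : f (w - c • u) = f w - c • f u := by rw [map_sub, map_smul]
    have hfuu : ⟪f u, f u⟫ ≠ 0 := (inner_self_ne_zero (𝕜 := ℝ)).2 hu
    have hfww : ⟪f w, f w⟫ ≠ 0 := (inner_self_ne_zero (𝕜 := ℝ)).2 hw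
    have hvne : f (w - c • u) ≠ 0 := by
      rw [hfv]
      intro h0
      apply absurd hor
      rw [sub_eq_zero.mp h0, real_inner_smul_right]
      exact mul_ne_zero hcne hfuu
    have hfvΨ : f (w - c • u) ∈ Ψ := image_mem f hf hvΦ hvne
    have step1 : Rel Ψ (f u) (f (w - c • u)) := by
      refine ⟨hfu, hfvΨ, ?_⟩
      rw [hfv, inner_sub_right, real_inner_smul_right, hor, zero_sub]
      exact neg_ne_zero.2 (mul_ne_zero hcne hfuu)
    have step2 : Rel Ψ (f (w - c • u)) (f w) := by
      refine ⟨hfvΨ, hfw, ?_⟩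
      rw [hfv, inner_sub_left, real_inner_smul_left, hor, mul_zero, sub_zero]
      exact hfww
    exact Relation.ReflTransGen.trans (.single step1) (.single step2)

include hΦ hf in
theorem chain_lemma : ∀ n : ℕ, ∀ u w : V, ChN (Rel Φ) n u w → f u ≠ 0 → f w ≠ 0 →
    Relation.ReflTransGen (Rel Ψ) (f u) (f w) := by
  intro n
  induction n with
  | zero =>
    intro u w h hu hw
    cases h
    exact Relation.ReflTransGen.refl
  | succ n ih =>
    intro u w h hu hw
    cases h with
    | @head _ _ z _ hr htail =>
    ?_
    by_cases hz : f z ≠ 0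
    · exact Relation.ReflTransGen.trans (adjacent hΦ f hf hr hu hz) (ih z w htail hz hw)
    · push_neg at hz
      cases htail with
      | refl => exact absurd hz hw
      | @head m _ v _ hr2 htail2 =>
        obtain ⟨huΦ, hzΦ, huz⟩ := hr
        obtain ⟨_, hvΦ, hzv⟩ := hr2
        set c : ℝ := 2 * ⟪z, u⟫ / ⟪u, u⟫ with hc
        have huu : ⟪u, u⟫ ≠ 0 := (inner_self_ne_zero (𝕜 := ℝ)).2 (hΦ.ne_zero u huΦ)
        have hzu : ⟪z, u⟫ ≠ 0 := by rwa [real_inner_comm]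
        have hcne : c ≠ 0 := by
          rw [hc]; exact div_ne_zero (by simpa using hzu) huu
        have hz'Φ : z - c • u ∈ Φ := hΦ.reflect_mem u huΦ z hzΦ
        have hfz' : f (z - c • u) = -(c • f u) := by
          rw [map_sub, map_smul, hz, zero_sub]
        have hz'ne : f (z - c • u) ≠ 0 := by
          rw [hfz']
          exact neg_ne_zero.2 (smul_ne_zero hcne hu)
        have hfu : f u ∈ Ψ := image_mem f hf huΦ hu
        have hfz'Ψ : f (z - c • u) ∈ Ψ := image_mem f hf hz'Φ hz'ne
        have hfuu : ⟪f u, f u⟫ ≠ 0 := (inner_self_ne_zero (𝕜 := ℝ)).2 hu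
        have step : Rel Ψ (f u) (f (z - c • u)) := by
          refine ⟨hfu, hfz'Ψ, ?_⟩
          rw [hfz', inner_neg_right, real_inner_smul_right]
          exact neg_ne_zero.2 (mul_ne_zero hcne hfuu)
        by_cases ho : ⟪z - c • u, v⟫ = 0
        · -- then u is adjacent to v
          have huv : ⟪u, v⟫ ≠ 0 := by
            intro h0
            apply hzv
            have := ho
            rwa [inner_sub_left, real_inner_smul_left, h0, mul_zero, sub_zero] at this
          exact ih u w (ChN.head ⟨huΦ, hvΦ, huv⟩ htail2) hu hw
        · have hch : ChN (Rel Φ) (m + 1) (z - c • u) w :=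
            ChN.head ⟨hz'Φ, hvΦ, ho⟩ htail2
          exact Relation.ReflTransGen.trans (.single step) (ih _ w hch hz'ne hw)

end Morphism

end RootSystemMorphismAux

/-- For a morphism of root systems `f : Φ ∪ {0} → Ψ ∪ {0}` (induced by a real
linear map of the ambient spaces) and an irreducible component `Φ'` of `Φ` not
killed by `f`, there is a unique irreducible component `Ψ'` of `Ψ` with
`f(Φ') ⊆ Ψ' ∪ {0}`. -/
theorem existsUnique_component_of_rootSystem_morphism
    {V W : Type*} [NormedAddCommGroup V] [InnerProductSpace ℝ V] [FiniteDimensional ℝ V]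
    [NormedAddCommGroup W] [InnerProductSpace ℝ W] [FiniteDimensional ℝ W]
    {Φ : Set V} {Ψ : Set W} (hΦ : IsRootSystem Φ) (hΨ : IsRootSystem Ψ)
    (f : V →ₗ[ℝ] W) (hf : ∀ α ∈ Φ, f α ∈ Ψ ∪ {0})
    (Φ' : Set V) (hΦ' : IsIrreducibleComponent Φ Φ') (hnz : ∃ α ∈ Φ', f α ≠ 0) :
    ∃! Ψ' : Set W, IsIrreducibleComponent Ψ Ψ' ∧ f '' Φ' ⊆ Ψ' ∪ {0} := by
  open RootSystemMorphismAux in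
  obtain ⟨α, hαΦ, hΦ'eq⟩ := hΦ'
  obtain ⟨α₁, hα₁, hfα₁⟩ := hnz
  rw [hΦ'eq] at hα₁
  obtain ⟨hα₁Φ, hα₁rtg⟩ := hα₁
  have hfα₁Ψ : f α₁ ∈ Ψ := RootSystemMorphismAux.image_mem f hf hα₁Φ hfα₁
  -- the candidate component
  refine ⟨{β ∈ Ψ | Relation.ReflTransGen (RootSystemMorphismAux.Rel Ψ) (f α₁) β},
    ⟨⟨f α₁, hfα₁Ψ, rfl⟩, ?_⟩, ?_⟩
  · -- f '' Φ' is contained in the candidate ∪ {0}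
    rintro _ ⟨β, hβ, rfl⟩
    by_cases hfβ : f β = 0
    · exact Or.inr hfβ
    · rw [hΦ'eq] at hβ
      obtain ⟨hβΦ, hβrtg⟩ := hβ
      have hconn : Relation.ReflTransGen (RootSystemMorphismAux.Rel Φ) α₁ β :=
        Relation.ReflTransGen.trans (RootSystemMorphismAux.rtg_symm hα₁rtg) hβrtg
      obtain ⟨n, hch⟩ := RootSystemMorphismAux.exists_chN hconn
      have := RootSystemMorphismAux.chain_lemma hΦ f hf n α₁ β hch hfα₁ hfβ
      exact Or.inl ⟨RootSystemMorphismAux.image_mem f hf hβΦ hfβ, this⟩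
  · -- uniqueness
    rintro Ψ'' ⟨⟨β₀, hβ₀Ψ, rfl⟩, hsub⟩
    have hfα₁mem : f α₁ ∈ {β ∈ Ψ | Relation.ReflTransGen
        (RootSystemMorphismAux.Rel Ψ) β₀ β} ∪ {0} := by
      apply hsub
      refine ⟨α₁, ?_, rfl⟩
      rw [hΦ'eq]
      exact ⟨hα₁Φ, hα₁rtg⟩
    have hβ₀α₁ : Relation.ReflTransGen (RootSystemMorphismAux.Rel Ψ) β₀ (f α₁) := by
      rcases hfα₁mem with h | h
      · exact h.2
      · exact absurd h hfα₁
    ext γ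
    constructor
    · rintro ⟨hγΨ, hγ⟩
      exact ⟨hγΨ, Relation.ReflTransGen.trans
        (RootSystemMorphismAux.rtg_symm hβ₀α₁) hγ⟩
    · rintro ⟨hγΨ, hγ⟩
      exact ⟨hγΨ, Relation.ReflTransGen.trans hβ₀α₁ hγ⟩
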